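/- Let σ ⊂ ℝ^m be a lattice simplex of dimension d that is nonempty, i.e., σ contains a lattice point that is not a vertex. Then rdeg y ≤ d for all y ∈ M*(σ). -/

import Mathlib

open Set

noncomputable section

/-- Lift a point of `ℝ^m` to height 1 in `ℝ^(m+1)`. -/
def lift {m : ℕ} (x : Fin m → ℝ) : Fin (m + 1) → ℝ := Fin.snoc x 1

/-- A point with integer coordinates (a lattice point). -/
def isLat {n : ℕ} (x : Fin n → ℝ) : Prop := ∀ i, ∃ z : ℤ, x i = (z : ℝ)

lemma isLat_lift {m : ℕ} {p : Fin m → ℝ} (h : isLat p) : isLat (lift p) := by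
  intro i
  refine Fin.lastCases ?_ ?_ i
  · exact ⟨1, by simp [lift]⟩
  · intro j; obtain ⟨z, hz⟩ := h j; exact ⟨z, by simpa [lift] using hz⟩


lemma isLat_sub {n : ℕ} {a b : Fin n → ℝ} (ha : isLat a) (hb : isLat b) :
    isLat (a - b) := by
  intro i
  obtain ⟨z, hz⟩ := ha i; obtain ⟨w, hw⟩ := hb i
  exact ⟨z - w, by simp [hz, hw]⟩


lemma snoc_sum {m n : ℕ} (x : Fin n → Fin m → ℝ) (c : Fin n → ℝ) :
    ∑ i, c i • lift (x i) = Fin.snoc (∑ i, c i • x i) (∑ i, c i) := by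
  funext j
  refine Fin.lastCases ?_ ?_ j
  · simp [Finset.sum_apply, lift, Pi.smul_apply]
  · intro k
    simp [Finset.sum_apply, lift, Pi.smul_apply]


lemma mem_convexHull' {m n : ℕ} {x : Fin n → Fin m → ℝ} {p : Fin m → ℝ} :
    p ∈ convexHull ℝ (Set.range x) ↔
      ∃ t : Fin n → ℝ, (∀ i, 0 ≤ t i) ∧ ∑ i, t i = 1 ∧ p = ∑ i, t i • x i := by
  rw [convexHull_range_eq_exists_affineCombination]
  constructor
  · rintro ⟨s, w, hw0, hw1, rfl⟩
    classical
    refine ⟨fun i => if i ∈ s then w i else 0, fun i => by by_cases h : i ∈ s <;> simp [h, hw0 i], ?_, ?_⟩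
    · rw [Finset.sum_ite_mem, Finset.univ_inter, hw1]
    · rw [Finset.affineCombination_eq_linear_combination s x w hw1]
      simp only [ite_smul, zero_smul]
      rw [Finset.sum_ite_mem, Finset.univ_inter]
  · rintro ⟨t, ht0, ht1, rfl⟩
    refine ⟨Finset.univ, t, fun i _ => ht0 i, ht1, ?_⟩
    rw [Finset.affineCombination_eq_linear_combination _ x t ht1]


/-- The cone `C(P)` generated by `P × {1}` (for convex `P`). -/
def coneOf {m : ℕ} (P : Set (Fin m → ℝ)) : Set (Fin (m + 1) → ℝ) :=
  {y | ∃ (c : ℝ) (p : Fin m → ℝ), 0 ≤ c ∧ p ∈ P ∧ y = c • lift p}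

lemma coneOf_eq {m d : ℕ} (σ : Set (Fin m → ℝ)) (x : Fin (d + 1) → (Fin m → ℝ))
    (hσ : σ = convexHull ℝ (Set.range x)) :
    coneOf σ = {y | ∃ c : Fin (d + 1) → ℝ, (∀ i, 0 ≤ c i) ∧ y = ∑ i, c i • lift (x i)} := by
  subst hσ
  ext y
  constructor
  · rintro ⟨c, p, hc, hp, rfl⟩
    obtain ⟨t, ht0, ht1, rfl⟩ := mem_convexHull'.mp hp
    refine ⟨fun i => c * t i, fun i => mul_nonneg hc (ht0 i), ?_⟩
    rw [snoc_sum]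
    funext j
    refine Fin.lastCases ?_ ?_ j
    · simp [lift, ht1, ← Finset.mul_sum]
    · intro k
      simp [lift, Finset.sum_apply, Finset.mul_sum, mul_assoc]
  · rintro ⟨c, hc, rfl⟩
    by_cases h : ∑ i, c i = 0
    · have hz : ∀ i, c i = 0 := by
        intro i
        have := (Finset.sum_eq_zero_iff_of_nonneg (fun i _ => hc i)).mp h
        exact this i (Finset.mem_univ i)
      refine ⟨0, x 0, le_refl 0, subset_convexHull ℝ _ ⟨0, rfl⟩, ?_⟩
      simp [hz]
    · have hpos : 0 < ∑ i, c i :=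
        lt_of_le_of_ne (Finset.sum_nonneg fun i _ => hc i) (Ne.symm h)
      refine ⟨∑ i, c i, ∑ i, ((∑ j, c j)⁻¹ * c i) • x i, le_of_lt hpos, ?_, ?_⟩
      · exact mem_convexHull'.mpr ⟨fun i => (∑ j, c j)⁻¹ * c i,
          fun i => mul_nonneg (inv_nonneg.mpr hpos.le) (hc i),
          by rw [← Finset.mul_sum, inv_mul_cancel₀ h], rfl⟩
      · rw [snoc_sum]
        funext j
        refine Fin.lastCases ?_ ?_ j
        · simp [lift]
        · intro k
          simp only [Fin.snoc_castSucc, Pi.smul_apply, lift, Finset.sum_apply, smul_eq_mul]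
          rw [Finset.mul_sum]
          refine Finset.sum_congr rfl fun i _ => ?_
          field_simp


lemma lin_indep {m d : ℕ} (x : Fin (d + 1) → (Fin m → ℝ)) (hx : AffineIndependent ℝ x) :
    LinearIndependent ℝ (fun i => lift (x i)) := by
  rw [Fintype.linearIndependent_iff]
  intro g hg
  have h := congrFun hg
  have hlast : ∑ i, g i = 0 := by
    have := h (Fin.last m)
    simpa [Finset.sum_apply, lift] using this
  have hsum : ∑ i, g i • x i = 0 := by
    funext k
    have := h (Fin.castSucc k)
    simpa [Finset.sum_apply, lift] using this
  intro i
  exact affineIndependent_iff.mp hx Finset.univ g hlast (by simpa using hsum) i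
    (Finset.mem_univ i)


lemma intrinsic_cone {N n : ℕ} (v : Fin n → (Fin N → ℝ)) (hv : LinearIndependent ℝ v) :
    intrinsicInterior ℝ {y | ∃ c : Fin n → ℝ, (∀ i, 0 ≤ c i) ∧ y = ∑ i, c i • v i} =
      {y | ∃ c : Fin n → ℝ, (∀ i, 0 < c i) ∧ y = ∑ i, c i • v i} := by
  classical
  set S : (Fin n → ℝ) →ₗ[ℝ] (Fin N → ℝ) := Fintype.linearCombination ℝ v with hS
  have hSapp : ∀ c, S c = ∑ i, c i • v i := fun c => Fintype.linearCombination_apply ℝ v c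
  set Q : Set (Fin n → ℝ) := {c | ∀ i, 0 ≤ c i} with hQ
  set C : Set (Fin N → ℝ) := {y | ∃ c : Fin n → ℝ, (∀ i, 0 ≤ c i) ∧ y = ∑ i, c i • v i} with hCdef
  have hC : C = S '' Q := by
    ext y; constructor
    · rintro ⟨c, hc, rfl⟩; exact ⟨c, hc, (hSapp c).symm⟩
    · rintro ⟨c, hc, rfl⟩; exact ⟨c, hc, (hSapp c).symm⟩
  set V : Submodule ℝ (Fin N → ℝ) := Submodule.span ℝ (Set.range v) with hV
  have hCV : C ⊆ (V : Set (Fin N → ℝ)) := by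
    rintro y ⟨c, hc, rfl⟩
    exact Submodule.sum_mem _ fun i _ =>
      Submodule.smul_mem _ _ (Submodule.subset_span ⟨i, rfl⟩)
  have hvC : ∀ i, v i ∈ C := by
    intro i
    refine ⟨Pi.single i 1, fun j => by by_cases h : j = i <;> simp [h, Pi.single_apply], ?_⟩
    simp [Pi.single_apply, ite_smul]
  have h0 : (0 : Fin N → ℝ) ∈ C := ⟨0, fun i => le_refl 0, by simp⟩
  have hspan : ((affineSpan ℝ C : Set (Fin N → ℝ))) = (V : Set (Fin N → ℝ)) := by
    have h1 := affineSpan_insert_zero (k := ℝ) C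
    rw [Set.insert_eq_of_mem h0] at h1
    rw [h1]
    refine le_antisymm (Submodule.span_le.mpr hCV) (Submodule.span_le.mpr ?_)
    rintro _ ⟨i, rfl⟩
    exact Submodule.subset_span (hvC i)
  -- the basis and equivalences
  let b : Module.Basis (Fin n) ℝ V := Module.Basis.span hv
  let e : (Fin n → ℝ) ≃ₗ[ℝ] V := b.equivFun.symm
  have he : ∀ c, ((e c : V) : Fin N → ℝ) = S c := by
    intro c
    rw [hSapp]
    show ((b.equivFun.symm c : V) : Fin N → ℝ) = _
    rw [Module.Basis.equivFun_symm_apply]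
    push_cast
    refine Finset.sum_congr rfl fun i _ => ?_
    rw [Module.Basis.span_apply]
  let ψ : (Fin n → ℝ) ≃ₜ V := e.toContinuousLinearEquiv.toHomeomorph
  let χ : (V : Set (Fin N → ℝ)) ≃ₜ (affineSpan ℝ C : Set (Fin N → ℝ)) :=
    Homeomorph.setCongr hspan.symm
  let G : (Fin n → ℝ) ≃ₜ (affineSpan ℝ C : Set (Fin N → ℝ)) := ψ.trans χ
  have hG : ∀ c, ((G c : Fin N → ℝ)) = S c := fun c => he c
  have hQint : interior Q = {c : Fin n → ℝ | ∀ i, 0 < c i} := by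
    have hq : Q = Set.pi Set.univ (fun _ => Set.Ici (0 : ℝ)) := by
      ext c; simp [hQ, Set.mem_pi, Pi.le_def]
    rw [hq, interior_pi_set Set.finite_univ]
    ext c; simp [Set.mem_pi]
  have hGQ : G '' Q = ((↑) ⁻¹' C : Set (affineSpan ℝ C)) := by
    ext u
    simp only [Set.mem_image, Set.mem_preimage]
    constructor
    · rintro ⟨c, hc, rfl⟩
      show ((G c : Fin N → ℝ)) ∈ C
      rw [hG, hC]
      exact ⟨c, hc, rfl⟩
    · intro hu
      obtain ⟨c, hc, hcu⟩ := hu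
      exact ⟨c, hc, Subtype.ext (by rw [hG, hSapp]; exact hcu.symm)⟩
  have key : intrinsicInterior ℝ C = S '' interior Q := by
    have h2 : interior (⇑G '' Q) = ⇑G '' interior Q := (G.image_interior Q).symm
    rw [intrinsicInterior, ← hGQ, h2, ← Set.image_comp]
    refine Set.image_congr fun c _ => hG c
  rw [key, hQint]
  ext y
  constructor
  · rintro ⟨c, hc, rfl⟩
    exact ⟨c, hc, (hSapp c).symm⟩
  · rintro ⟨c, hc, rfl⟩
    exact ⟨c, hc, (hSapp c).symm⟩


/-- The semigroup `M(P)` generated by the lattice points of `P × {1}`. -/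
def Msemi {m : ℕ} (P : Set (Fin m → ℝ)) : AddSubmonoid (Fin (m + 1) → ℝ) :=
  AddSubmonoid.closure {y | ∃ p ∈ P, isLat p ∧ y = lift p}

/-- `M*(P)`: the lattice points in the relative interior of `C(P)`. -/
def Mstar {m : ℕ} (P : Set (Fin m → ℝ)) : Set (Fin (m + 1) → ℝ) :=
  {y | y ∈ intrinsicInterior ℝ (coneOf P) ∧ isLat y}

/-- The degree: the last coordinate. -/
def deg {m : ℕ} (y : Fin (m + 1) → ℝ) : ℝ := y (Fin.last m)

lemma deg_sum {m n : ℕ} (x : Fin n → Fin m → ℝ) (c : Fin n → ℝ) :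
    deg (∑ i, c i • lift (x i)) = ∑ i, c i := by
  rw [snoc_sum]; simp [deg]


lemma deg_add {m : ℕ} (a b : Fin (m + 1) → ℝ) : deg (a + b) = deg a + deg b := rfl


lemma deg_lift {m : ℕ} (p : Fin m → ℝ) : deg (lift p) = 1 := by simp [deg, lift]


lemma lift_mem_Msemi {m : ℕ} {σ : Set (Fin m → ℝ)} {q : Fin m → ℝ}
    (hq : q ∈ σ) (hlat : isLat q) : lift q ∈ Msemi σ :=
  AddSubmonoid.subset_closure ⟨q, hq, hlat, rfl⟩


lemma step_lemma {m d : ℕ} (σ : Set (Fin m → ℝ)) (x : Fin (d + 1) → (Fin m → ℝ))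
    (hx : AffineIndependent ℝ x) (hxlat : ∀ i, isLat (x i))
    (hσ : σ = convexHull ℝ (Set.range x))
    (hne : ∃ p ∈ σ, isLat p ∧ p ∉ Set.range x)
    {y : Fin (m + 1) → ℝ} (hy : y ∈ Mstar σ) (hdeg : (d : ℝ) < deg y) :
    ∃ y' q, y' ∈ Mstar σ ∧ q ∈ σ ∧ isLat q ∧ y = y' + lift q := by
  classical
  obtain ⟨hyint, hylat⟩ := hy
  rw [coneOf_eq σ x hσ, intrinsic_cone _ (lin_indep x hx)] at hyint
  obtain ⟨c, hc, hyc⟩ := hyint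
  have hdegy : deg y = ∑ i, c i := by rw [hyc, deg_sum]
  -- integrality : deg y ≥ d + 1
  have hd1 : (d : ℝ) + 1 ≤ deg y := by
    obtain ⟨z, hz⟩ := hylat (Fin.last m)
    have hz' : deg y = (z : ℝ) := hz
    have h1 : (d : ℤ) < z := by exact_mod_cast hz' ▸ hdeg
    have h2 : (d : ℤ) + 1 ≤ z := h1
    rw [hz']; exact_mod_cast h2
  by_cases hcase : ∃ i, 1 < c i
  · obtain ⟨i, hi⟩ := hcase
    set c' : Fin (d + 1) → ℝ := fun j => if j = i then c j - 1 else c j with hc'def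
    have hc' : ∀ j, 0 < c' j := by
      intro j
      by_cases h : j = i
      · subst h; simp only [hc'def, if_pos rfl]; linarith
      · simpa [hc'def, h] using hc j
    have hsum : ∑ j, c j • lift (x j) = (∑ j, c' j • lift (x j)) + lift (x i) := by
      have h1 : ∀ j : Fin (d + 1),
          c j • lift (x j) = c' j • lift (x j) + if j = i then lift (x j) else 0 := by
        intro j
        by_cases h : j = i
        · subst h
          simp only [hc'def, if_true, eq_self_iff_true, sub_smul, one_smul]
          abel
        · simp [hc'def, h]
      rw [Finset.sum_congr rfl fun j _ => h1 j, Finset.sum_add_distrib,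
        Finset.sum_ite_eq' Finset.univ i fun j => lift (x j)]
      simp only [Finset.mem_univ, if_true]
    have hy' : y - lift (x i) = ∑ j, c' j • lift (x j) := by
      rw [hyc, hsum]; abel
    refine ⟨y - lift (x i), x i, ⟨?_, isLat_sub hylat (isLat_lift (hxlat i))⟩,
      hσ ▸ subset_convexHull ℝ _ ⟨i, rfl⟩, hxlat i, by abel⟩
    rw [coneOf_eq σ x hσ, intrinsic_cone _ (lin_indep x hx)]
    exact ⟨c', hc', hy'⟩
  · push_neg at hcase
    -- all c i ≤ 1, so all c i = 1
    have hsum_le : ∑ i, c i ≤ (d : ℝ) + 1 := by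
      calc ∑ i, c i ≤ ∑ _i : Fin (d + 1), (1 : ℝ) :=
            Finset.sum_le_sum fun i _ => hcase i
        _ = (d : ℝ) + 1 := by simp [Finset.sum_const]
    have hsum_eq : ∑ i, c i = (d : ℝ) + 1 := le_antisymm hsum_le (by linarith [hdegy ▸ hd1])
    have hall : ∀ i, c i = 1 := by
      intro i
      by_contra h
      have hlt : c i < 1 := lt_of_le_of_ne (hcase i) h
      have : ∑ j, c j < ∑ _j : Fin (d + 1), (1 : ℝ) :=
        Finset.sum_lt_sum (fun j _ => hcase j) ⟨i, Finset.mem_univ i, hlt⟩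
      rw [hsum_eq] at this
      simp [Finset.sum_const] at this
    obtain ⟨p, hpσ, hplat, hpnv⟩ := hne
    obtain ⟨t, ht0, ht1, hpt⟩ := mem_convexHull'.mp (hσ ▸ hpσ)
    have htlt : ∀ i, t i < 1 := by
      intro i
      have hti : t i ≤ 1 := ht1 ▸ Finset.single_le_sum (fun j _ => ht0 j) (Finset.mem_univ i)
      rcases lt_or_eq_of_le hti with h1 | h1
      · exact h1
      · exfalso
        apply hpnv
        refine ⟨i, ?_⟩
        have hz : ∑ j ∈ Finset.univ.erase i, t j = 0 := by
          have := Finset.add_sum_erase Finset.univ t (Finset.mem_univ i)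
          rw [ht1, h1] at this
          linarith
        have hz' : ∀ j ∈ Finset.univ.erase i, t j = 0 :=
          (Finset.sum_eq_zero_iff_of_nonneg fun j _ => ht0 j).mp hz
        rw [hpt, ← Finset.add_sum_erase Finset.univ _ (Finset.mem_univ i), h1,
          Finset.sum_eq_zero fun j hj => by rw [hz' j hj, zero_smul]]
        simp
    have hliftp : lift p = ∑ i, t i • lift (x i) := by
      rw [snoc_sum, ht1, ← hpt]; rfl
    have hy' : y - lift p = ∑ j, (c j - t j) • lift (x j) := by
      rw [hyc, hliftp, ← Finset.sum_sub_distrib]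
      exact Finset.sum_congr rfl fun j _ => (sub_smul _ _ _).symm
    refine ⟨y - lift p, p, ⟨?_, isLat_sub hylat (isLat_lift hplat)⟩, hpσ, hplat, by abel⟩
    rw [coneOf_eq σ x hσ, intrinsic_cone _ (lin_indep x hx)]
    exact ⟨fun j => c j - t j, fun j => by
      have h1 := htlt j; have h2 := hall j
      show (0:ℝ) < c j - t j
      linarith, hy'⟩


/-- The reduced `P`-degree of `y`. -/
def rdeg {m : ℕ} (P : Set (Fin m → ℝ)) (y : Fin (m + 1) → ℝ) : ℝ :=
  sInf {r | ∃ z w, z ∈ Mstar P ∧ w ∈ Msemi P ∧ y = z + w ∧ r = deg z}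

/-- An empty lattice simplex: its only lattice points are its vertices. -/
def IsEmptyLatticeSimplex {m : ℕ} (s : Set (Fin m → ℝ)) : Prop :=
  ∃ (k : ℕ) (x : Fin (k + 1) → (Fin m → ℝ)), AffineIndependent ℝ x ∧
    (∀ i, isLat (x i)) ∧ s = convexHull ℝ (Set.range x) ∧
    (∀ p ∈ s, isLat p → p ∈ Set.range x)

/-- A lattice triangulation of `P`: a finite face-closed family of empty lattice
simplices covering `P`, with pairwise disjoint relative interiors (every point of `P`
lies in the relative interior of exactly one simplex), and using every lattice point
of `P` as a vertex. -/
structure IsLatticeTriangulation {m : ℕ} (P : Set (Fin m → ℝ))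
    (T : Set (Set (Fin m → ℝ))) : Prop where
  finite : T.Finite
  simplex : ∀ s ∈ T, IsEmptyLatticeSimplex s
  subset : ∀ s ∈ T, s ⊆ P
  partition : ∀ p ∈ P, ∃! s, s ∈ T ∧ p ∈ intrinsicInterior ℝ s
  vertex : ∀ p ∈ P, isLat p → {p} ∈ T

/-- for a nonempty lattice `d`-simplex, `rdeg y ≤ d` for all `y ∈ M*(σ)`. -/
theorem stmt1 {m d : ℕ} (σ : Set (Fin m → ℝ)) (x : Fin (d + 1) → (Fin m → ℝ))
    (hx : AffineIndependent ℝ x) (hxlat : ∀ i, isLat (x i))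
    (hσ : σ = convexHull ℝ (Set.range x))
    (hne : ∃ p ∈ σ, isLat p ∧ p ∉ Set.range x) :
    ∀ y ∈ Mstar σ, ∃ z w, z ∈ Mstar σ ∧ w ∈ Msemi σ ∧ y = z + w ∧ deg z ≤ d := by
  suffices h : ∀ n : ℕ, ∀ y ∈ Mstar σ, deg y ≤ n →
      ∃ z w, z ∈ Mstar σ ∧ w ∈ Msemi σ ∧ y = z + w ∧ deg z ≤ d by
    intro y hy
    exact h ⌈deg y⌉₊ y hy (Nat.le_ceil _)
  intro n
  induction n with
  | zero =>
    intro y hy hn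
    by_cases hd : deg y ≤ d
    · exact ⟨y, 0, hy, (Msemi σ).zero_mem, (add_zero y).symm, hd⟩
    · push_neg at hd
      have : (0 : ℝ) ≤ d := Nat.cast_nonneg d
      simp only [Nat.cast_zero] at hn
      linarith
  | succ n ih =>
    intro y hy hn
    by_cases hd : deg y ≤ d
    · exact ⟨y, 0, hy, (Msemi σ).zero_mem, (add_zero y).symm, hd⟩
    · push_neg at hd
      obtain ⟨y', q, hy', hqσ, hqlat, hyq⟩ := step_lemma σ x hx hxlat hσ hne hy hd
      have hdeg' : deg y' ≤ n := by
        have h1 : deg y = deg y' + 1 := by rw [hyq, deg_add, deg_lift]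
        have h2 : (n : ℝ) + 1 = ((n + 1 : ℕ) : ℝ) := by push_cast; ring
        linarith [hn, h2 ▸ hn]
      obtain ⟨z, w, hz, hw, hzw, hdz⟩ := ih y' hy' hdeg'
      exact ⟨z, w + lift q, hz, (Msemi σ).add_mem hw (lift_mem_Msemi hqσ hqlat),
        by rw [hyq, hzw, add_assoc], hdz⟩
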